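/- Let L be a string of length n with exactly r maximal equal-letter runs, containing a character $ at position p with 1 ≤ p ≤ n such that $ occurs nowhere else, and let c ≠ $ be a character with L[p−1] ≠ c (if p > 1) and L[p+1] ≠ c (if p < n). Let L' be obtained from L by replacing L[p] with c and then inserting $ at an arbitrary position. Then L' has at least r + 1 maximal runs. -/

import Mathlib

/-- Number of maximal equal-letter runs of a list. -/
def runCount {α : Type*} [DecidableEq α] (l : List α) : ℕ :=
  (l.destutter (· ≠ ·)).length

section aux
variable {α : Type*} [DecidableEq α]

lemma runCount_cons (a : α) (l : List α) :
    runCount (a :: l) = (List.destutter' (· ≠ ·) a l).length := rfl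

lemma destutter'_len_cons (a b : α) (l : List α) :
    (List.destutter' (· ≠ ·) a (b :: l)).length =
      (if a = b then 0 else 1) + (List.destutter' (· ≠ ·) b l).length := by
  by_cases h : a = b
  · subst h
    rw [List.destutter'_cons_neg _ (by simp), if_pos rfl, Nat.zero_add]
  · rw [List.destutter'_cons_pos _ (by exact h), if_neg h, List.length_cons]
    omega

lemma destutter'_len_nil (a : α) : (List.destutter' (· ≠ ·) a ([] : List α)).length = 1 := rfl

lemma destutter'_len_of_ne_head (x : α) (B : List α)
    (h : ∀ hB : B ≠ [], x ≠ B.head hB) :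
    (List.destutter' (· ≠ ·) x B).length = 1 + runCount B := by
  cases B with
  | nil => simp [destutter'_len_nil, runCount, List.destutter]
  | cons b B' =>
    have hxb : x ≠ b := h (by simp)
    rw [destutter'_len_cons, if_neg hxb, runCount_cons]

lemma destutter'_len_append (x : α) (B : List α)
    (hB : ∀ hB : B ≠ [], x ≠ B.head hB) :
    ∀ (A : List α) (a : α), (a :: A).getLast (by simp) ≠ x →
      (List.destutter' (· ≠ ·) a (A ++ x :: B)).length =
        (List.destutter' (· ≠ ·) a A).length + 1 + runCount B := by
  intro A
  induction A with
  | nil =>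
    intro a ha
    simp only [List.getLast_singleton] at ha
    rw [List.nil_append, destutter'_len_cons, if_neg ha,
      destutter'_len_of_ne_head x B hB, destutter'_len_nil]
    omega
  | cons b A' ih =>
    intro a ha
    have hb : (b :: A').getLast (by simp) ≠ x := by
      rwa [List.getLast_cons (by simp)] at ha
    have := ih b hb
    simp only [List.cons_append, destutter'_len_cons, this]
    omega

lemma runCount_split (x : α) (A B : List α)
    (hA : ∀ hA : A ≠ [], A.getLast hA ≠ x)
    (hB : ∀ hB : B ≠ [], x ≠ B.head hB) :
    runCount (A ++ x :: B) = runCount A + 1 + runCount B := by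
  cases A with
  | nil =>
    simp only [List.nil_append, runCount_cons, destutter'_len_of_ne_head x B hB]
    simp [runCount, List.destutter]
  | cons a A' =>
    have := destutter'_len_append x B hB A' a (hA (by simp))
    simp only [List.cons_append, runCount_cons, this]

lemma destutter'_len_subadd (B : List α) :
    ∀ (A : List α) (a : α),
      (List.destutter' (· ≠ ·) a (A ++ B)).length ≤
        (List.destutter' (· ≠ ·) a A).length + runCount B := by
  intro A
  induction A with
  | nil =>
    intro a
    cases B with
    | nil => simp [destutter'_len_nil, runCount, List.destutter]
    | cons b B' =>
      rw [List.nil_append, destutter'_len_cons, runCount_cons, destutter'_len_nil]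
      split <;> omega
  | cons b A' ih =>
    intro a
    have := ih b
    simp only [List.cons_append, destutter'_len_cons]
    split <;> omega

lemma runCount_append_le (A B : List α) :
    runCount (A ++ B) ≤ runCount A + runCount B := by
  cases A with
  | nil => simp [runCount, List.destutter]
  | cons a A' =>
    simpa [runCount_cons] using destutter'_len_subadd B A' a

omit [DecidableEq α] in
lemma insertIdx_eq_take_cons_drop (l : List α) (x : α) :
    ∀ q, q ≤ l.length → l.insertIdx q x = l.take q ++ x :: l.drop q := by
  induction l with
  | nil =>
    intro q hq
    have : q = 0 := by simpa using hq
    subst this; simp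
  | cons a l ih =>
    intro q hq
    cases q with
    | zero => simp
    | succ q' =>
      simp only [List.insertIdx_succ_cons, List.take_succ_cons, List.drop_succ_cons,
        List.cons_append]
      rw [ih q' (by simpa using hq)]

end aux

/-- Let `L` have exactly `r` maximal runs and contain a unique character
`$` at position `p`, and let `c ≠ $` differ from both neighbors of `$` (when they
exist).  If `L'` is obtained by replacing `L[p]` with `c` and then inserting `$` at an
arbitrary position, then `L'` has at least `r + 1` maximal runs. -/
theorem runCount_update_increases {α : Type*} [DecidableEq α] (L : List α) (r : ℕ)
    (hr : runCount L = r) (p : ℕ) (hp : p < L.length) (dollar c : α)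
    (hLp : L[p]'hp = dollar)
    (huniq : ∀ j (hj : j < L.length), L[j]'hj = dollar → j = p)
    (hc : c ≠ dollar)
    (hleft : ∀ (_ : 0 < p), L[p - 1]'(by omega) ≠ c)
    (hright : ∀ (h : p + 1 < L.length), L[p + 1]'h ≠ c)
    (q : ℕ) (hq : q ≤ L.length) :
    r + 1 ≤ runCount (((L.set p c).insertIdx q dollar)) := by
  set A := L.take p with hA
  set B := L.drop (p + 1) with hB
  have hlenA : A.length = p := by
    rw [hA, List.length_take]; omega
  have hlastA : ∀ hne : A ≠ [], ∃ h0 : 0 < p, A.getLast hne = L[p-1]'(by omega) := by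
    intro hne
    have h0 : 0 < p := by
      rcases Nat.eq_zero_or_pos p with h | h
      · exfalso; apply hne
        have : A.length = 0 := by omega
        exact List.length_eq_zero_iff.mp this
      · exact h
    refine ⟨h0, ?_⟩
    rw [List.getLast_eq_getElem]
    simp only [hlenA]
    simp only [hA, List.getElem_take]
  have hheadB : ∀ hne : B ≠ [], ∃ h1 : p + 1 < L.length, B.head hne = L[p+1]'h1 := by
    intro hne
    have hlen : 0 < B.length := List.length_pos_iff.mpr hne
    have h1 : p + 1 < L.length := by
      rw [hB, List.length_drop] at hlen; omega
    refine ⟨h1, ?_⟩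
    rw [List.head_eq_getElem]
    simp [hB, List.getElem_drop]
  have hLdecomp : L = A ++ L[p] :: B := by
    conv_lhs => rw [← List.take_append_drop p L]
    rw [← List.getElem_cons_drop hp]
  have hsetdecomp : L.set p c = A ++ c :: B := by
    conv_lhs => rw [hLdecomp]
    rw [List.set_append]
    simp [hlenA]
  have hrunL : runCount A + 1 + runCount B = r := by
    rw [← hr]
    conv_rhs => rw [hLdecomp, hLp]
    rw [runCount_split dollar A B ?_ ?_]
    · intro hne
      obtain ⟨h0, he⟩ := hlastA hne
      rw [he]
      intro hcon
      have := huniq (p-1) (by omega) hcon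
      omega
    · intro hne hcon
      obtain ⟨h1, he⟩ := hheadB hne
      rw [he] at hcon
      have := huniq (p+1) h1 hcon.symm
      omega
  have hrunM : runCount (L.set p c) = r := by
    rw [hsetdecomp, runCount_split c A B ?_ ?_]
    · exact hrunL
    · intro hne
      obtain ⟨h0, he⟩ := hlastA hne
      rw [he]; exact hleft h0
    · intro hne
      obtain ⟨h1, he⟩ := hheadB hne
      rw [he]
      exact fun hcon => hright h1 hcon.symm
  have hnomem : dollar ∉ L.set p c := by
    intro hmem
    obtain ⟨j, hj, hje⟩ := List.getElem_of_mem hmem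
    rw [List.length_set] at hj
    rw [List.getElem_set] at hje
    by_cases hjp : p = j
    · rw [if_pos hjp] at hje; exact hc hje
    · rw [if_neg hjp] at hje
      exact hjp (huniq j hj hje).symm
  set M := L.set p c with hM
  have hqM : q ≤ M.length := by
    rw [hM, List.length_set]; exact hq
  rw [insertIdx_eq_take_cons_drop M dollar q hqM]
  rw [runCount_split dollar (M.take q) (M.drop q) ?_ ?_]
  · have hle : runCount M ≤ runCount (M.take q) + runCount (M.drop q) := by
      conv_lhs => rw [← List.take_append_drop q M]
      exact runCount_append_le _ _
    omega
  · intro hne hcon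
    exact hnomem (List.mem_of_mem_take (hcon ▸ List.getLast_mem hne))
  · intro hne hcon
    exact hnomem (List.mem_of_mem_drop (hcon ▸ List.head_mem hne))
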